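/- For fixed u ∈ ℝ and d > 0, lim_{σ→0⁺} CLσ(u|d) = min(max(u,0), d), i.e., the clipped-Laplace link converges pointwise to the clipped ReLU function as σ → 0⁺. -/
import Mathlib


open Filter

noncomputable def F (u : ℝ) : ℝ := if u ≤ 0 then Real.exp u / 2 else 1 - Real.exp (-u) / 2

noncomputable def L (σ u : ℝ) : ℝ := -σ * Real.log (1 - F (u / σ))

noncomputable def s (σ d : ℝ) : ℝ := (d / 2) / (d / 2 + σ * Real.log 2)

noncomputable def CL (σ d u : ℝ) : ℝ :=
  s σ d * (L σ u - u - L σ (d - u)) + d / 2 * (1 + s σ d)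

lemma limL (v : ℝ) :
    Tendsto (fun σ : ℝ => L σ v) (nhdsWithin 0 (Set.Ioi 0)) (nhds (max v 0)) := by
  rcases le_or_gt v 0 with hv | hv
  · rw [max_eq_right hv]
    have hupper : ∀ σ ∈ Set.Ioi (0:ℝ), L σ v ≤ σ * Real.log 2 := by
      intro σ hσ
      have hσ0 : (0:ℝ) < σ := hσ
      have hvs : v / σ ≤ 0 := div_nonpos_of_nonpos_of_nonneg hv hσ0.le
      have hexp : Real.exp (v / σ) ≤ 1 := Real.exp_le_one_iff.2 hvs
      have hF : F (v / σ) = Real.exp (v / σ) / 2 := if_pos hvs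
      have h1 : (1:ℝ)/2 ≤ 1 - Real.exp (v / σ) / 2 := by linarith
      have hlog : Real.log (1/2) ≤ Real.log (1 - Real.exp (v / σ) / 2) :=
        Real.log_le_log (by norm_num) h1
      have : -Real.log 2 ≤ Real.log (1 - Real.exp (v / σ) / 2) := by
        rwa [Real.log_div one_ne_zero two_ne_zero, Real.log_one, zero_sub] at hlog
      unfold L
      rw [hF]
      nlinarith [hσ0]
    have hlower : ∀ σ ∈ Set.Ioi (0:ℝ), (0:ℝ) ≤ L σ v := by
      intro σ hσ
      have hσ0 : (0:ℝ) < σ := hσ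
      have hvs : v / σ ≤ 0 := div_nonpos_of_nonpos_of_nonneg hv hσ0.le
      have hexp : 0 < Real.exp (v / σ) := Real.exp_pos _
      have hexp1 : Real.exp (v / σ) ≤ 1 := Real.exp_le_one_iff.2 hvs
      have hF : F (v / σ) = Real.exp (v / σ) / 2 := if_pos hvs
      have h1 : 1 - Real.exp (v / σ) / 2 ≤ 1 := by linarith
      have hlog : Real.log (1 - Real.exp (v / σ) / 2) ≤ 0 :=
        Real.log_nonpos (by linarith) h1
      unfold L
      rw [hF]
      nlinarith [hσ0]
    have h0 : Tendsto (fun _ : ℝ => (0:ℝ)) (nhdsWithin 0 (Set.Ioi 0)) (nhds 0) :=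
      tendsto_const_nhds
    have h2 : Tendsto (fun σ : ℝ => σ * Real.log 2) (nhdsWithin 0 (Set.Ioi 0)) (nhds 0) := by
      have : Tendsto (fun σ : ℝ => σ * Real.log 2) (nhds 0) (nhds (0 * Real.log 2)) :=
        (continuous_id.mul continuous_const).tendsto 0
      simpa using this.mono_left nhdsWithin_le_nhds
    refine tendsto_of_tendsto_of_tendsto_of_le_of_le' h0 h2 ?_ ?_
    · filter_upwards [self_mem_nhdsWithin] with σ hσ using hlower σ hσ
    · filter_upwards [self_mem_nhdsWithin] with σ hσ using hupper σ hσ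
  · rw [max_eq_left hv.le]
    have hEq : ∀ σ ∈ Set.Ioi (0:ℝ), L σ v = v + σ * Real.log 2 := by
      intro σ hσ
      have hσ0 : (0:ℝ) < σ := hσ
      have hvs : 0 < v / σ := div_pos hv hσ0
      have hF : F (v / σ) = 1 - Real.exp (-(v / σ)) / 2 := if_neg (not_le.2 hvs)
      unfold L
      rw [hF]
      have : 1 - (1 - Real.exp (-(v / σ)) / 2) = Real.exp (-(v / σ)) / 2 := by ring
      rw [this, Real.log_div (Real.exp_ne_zero _) two_ne_zero, Real.log_exp]
      field_simp
      ring
    have h2 : Tendsto (fun σ : ℝ => v + σ * Real.log 2) (nhdsWithin 0 (Set.Ioi 0)) (nhds v) := by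
      have : Tendsto (fun σ : ℝ => v + σ * Real.log 2) (nhds 0) (nhds (v + 0 * Real.log 2)) :=
        (continuous_const.add (continuous_id.mul continuous_const)).tendsto 0
      simpa using this.mono_left nhdsWithin_le_nhds
    refine h2.congr' ?_
    filter_upwards [self_mem_nhdsWithin] with σ hσ using (hEq σ hσ).symm

lemma lims (d : ℝ) (hd : 0 < d) :
    Tendsto (fun σ : ℝ => s σ d) (nhdsWithin 0 (Set.Ioi 0)) (nhds 1) := by
  have hne : d / 2 ≠ 0 := by positivity
  have h : Tendsto (fun σ : ℝ => s σ d) (nhds 0) (nhds ((d/2) / (d/2 + 0 * Real.log 2))) := by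
    apply Tendsto.div tendsto_const_nhds
    · exact (continuous_const.add (continuous_id.mul continuous_const)).tendsto 0
    · simpa using hne
  have : (d/2) / (d/2 + 0 * Real.log 2) = 1 := by
    rw [zero_mul, add_zero, div_self hne]
  rw [this] at h
  exact h.mono_left nhdsWithin_le_nhds

theorem stmt15 (d : ℝ) (hd : 0 < d) (u : ℝ) :
    Tendsto (fun σ : ℝ => CL σ d u) (nhdsWithin 0 (Set.Ioi 0))
      (nhds (min (max u 0) d)) := by
  have hs := lims d hd
  have h1 := limL u
  have h2 := limL (d - u)
  have hmain : Tendsto (fun σ : ℝ => CL σ d u) (nhdsWithin 0 (Set.Ioi 0))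
      (nhds (1 * (max u 0 - u - max (d - u) 0) + d / 2 * (1 + 1))) := by
    unfold CL
    exact (hs.mul ((h1.sub tendsto_const_nhds).sub h2)).add
      (tendsto_const_nhds.mul (tendsto_const_nhds.add hs))
  have heq : 1 * (max u 0 - u - max (d - u) 0) + d / 2 * (1 + 1) = min (max u 0) d := by
    rcases le_total u 0 with hu | hu
    · rw [max_eq_right hu, max_eq_left (by linarith), min_eq_left hd.le]
      ring
    · rw [max_eq_left hu]
      rcases le_total u d with hud | hud
      · rw [max_eq_left (by linarith), min_eq_left hud]; ring
      · rw [max_eq_right (by linarith), min_eq_right hud]; ring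
  rwa [heq] at hmain
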